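/- With the normal ordering Σ_{i,j} :s_{ij}γ_{ji}: = Σ_{i>j} s_{ij}γ_{ji} + Σ_{i≤j} γ_{ji}s_{ij}, one has Σ_{i,j} :s_{ij}γ_{ji}: = Σ_{i,j} s_{ij}γ_{ji} + 2Σ_i i·γ_{ii}, and consequently [Σ_{ℓ,m} :s_{ℓm}γ_{mℓ}:, γ_{ij}]₊ = 6 s_{ij}. -/

import Mathlib

open Finset

/-- The cutoff index set `[-N, N] ⊂ ℤ`. -/
noncomputable def cutoff (N : ℕ) : Finset ℤ := Finset.Icc (-(N : ℤ)) (N : ℤ)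

/-- The normal-ordered spin operators
`s_{ij} = (1/2) Σ_m γ_{im}γ_{mj} − (N − i + 1/2)δ_{ij}`. -/
noncomputable def spinOp {A : Type*} [Ring A] [Algebra ℚ A] (N : ℕ)
    (γ : ℤ → ℤ → A) (i j : ℤ) : A :=
  (2 : ℚ)⁻¹ • ∑ l ∈ cutoff N, γ i l * γ l j -
    (if i = j then ((N : ℚ) - (i : ℚ) + (2 : ℚ)⁻¹) • (1 : A) else 0)

/-- The normal-ordered cubic sum
`Σ_{i,j} :s_{ij}γ_{ji}: = Σ_{i>j} s_{ij}γ_{ji} + Σ_{i≤j} γ_{ji}s_{ij}`. -/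
noncomputable def normalOrderedCubic {A : Type*} [Ring A] [Algebra ℚ A] (N : ℕ)
    (γ : ℤ → ℤ → A) : A :=
  ∑ i ∈ cutoff N, ∑ j ∈ cutoff N,
    if j < i then spinOp N γ i j * γ j i else γ j i * spinOp N γ i j

section Aux

set_option linter.unusedSectionVars false

variable {A : Type*} [Ring A] [Algebra ℚ A] {N : ℕ} {γ : ℤ → ℤ → A}

lemma card_cutoff : (cutoff N).card = 2*N+1 := by
  simp [cutoff, Int.card_Icc]; omega

lemma half_two_smul (x : A) : (2 : ℚ)⁻¹ • ((2:A) * x) = x := by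
  rw [two_mul, ← two_smul ℚ x, smul_smul]
  norm_num

lemma two_mul_eq_smul (x : A) : (2:A) * x = (2:ℚ) • x := by
  rw [two_mul, two_smul]

lemma two_ite_comm (c : Prop) [Decidable c] (x : A) :
    x * (if c then (2:A) else 0) = (if c then (2:A) else 0) * x := by
  split
  · rw [mul_two, two_mul]
  · rw [mul_zero, zero_mul]

lemma comm_spin
    (hγ : ∀ i ∈ cutoff N, ∀ j ∈ cutoff N, ∀ k ∈ cutoff N, ∀ l ∈ cutoff N,
      γ i j * γ k l + γ k l * γ i j =
        if i = l ∧ j = k then (2 : A) else 0)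
    (i j : ℤ) (hi : i ∈ cutoff N) (hj : j ∈ cutoff N) :
    γ j i * spinOp N γ i j - spinOp N γ i j * γ j i = γ j j - γ i i := by
  have per : ∀ m ∈ cutoff N,
      γ j i * (γ i m * γ m j) - γ i m * γ m j * γ j i =
      (if j = m then (2:A) else 0) * γ m j - γ i m * (if i = m then (2:A) else 0) := by
    intro m hm
    have h1 : γ j i * γ i m = (if j = m ∧ i = i then (2:A) else 0) - γ i m * γ j i :=
      eq_sub_of_add_eq (hγ j hj i hi i hi m hm)
    have h2 : γ j i * γ m j = (if j = j ∧ i = m then (2:A) else 0) - γ m j * γ j i :=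
      eq_sub_of_add_eq (hγ j hj i hi m hm j hj)
    simp only [and_true, true_and] at h1 h2
    calc γ j i * (γ i m * γ m j) - γ i m * γ m j * γ j i
        = (γ j i * γ i m) * γ m j - γ i m * γ m j * γ j i := by noncomm_ring
      _ = ((if j = m then (2:A) else 0) - γ i m * γ j i) * γ m j
            - γ i m * γ m j * γ j i := by rw [h1]
      _ = (if j = m then (2:A) else 0) * γ m j - γ i m * (γ j i * γ m j)
            - γ i m * γ m j * γ j i := by noncomm_ring
      _ = (if j = m then (2:A) else 0) * γ m j
            - γ i m * ((if i = m then (2:A) else 0) - γ m j * γ j i)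
            - γ i m * γ m j * γ j i := by rw [h2]
      _ = _ := by noncomm_ring
  have hc : ∀ x : A, x * (if i = j then ((N : ℚ) - (i : ℚ) + (2 : ℚ)⁻¹) • (1 : A) else 0)
      = (if i = j then ((N : ℚ) - (i : ℚ) + (2 : ℚ)⁻¹) • (1 : A) else 0) * x := by
    intro x
    split
    · rw [smul_mul_assoc, mul_smul_comm, one_mul, mul_one]
    · rw [mul_zero, zero_mul]
  have key : γ j i * ((2 : ℚ)⁻¹ • ∑ l ∈ cutoff N, γ i l * γ l j)
      - ((2 : ℚ)⁻¹ • ∑ l ∈ cutoff N, γ i l * γ l j) * γ j i = γ j j - γ i i := by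
    rw [mul_smul_comm, smul_mul_assoc, ← smul_sub, Finset.mul_sum, Finset.sum_mul,
      ← Finset.sum_sub_distrib]
    rw [Finset.sum_congr rfl per]
    rw [Finset.sum_sub_distrib]
    simp only [ite_mul, zero_mul, mul_ite, mul_zero]
    rw [Finset.sum_ite_eq (cutoff N) j (fun m => (2:A) * γ m j),
        Finset.sum_ite_eq (cutoff N) i (fun m => γ i m * (2:A))]
    simp only [hj, hi, if_true]
    rw [smul_sub, half_two_smul]
    congr 1
    rw [mul_two, ← two_mul, half_two_smul]
  unfold spinOp
  rw [mul_sub, sub_mul, hc, ← key]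
  abel

lemma filter_le_card (j : ℤ) (hj : j ∈ cutoff N) :
    ((cutoff N).filter (fun i => ¬ j < i)).card • (1:ℚ)
      - ((cutoff N).filter (fun i => ¬ i < j)).card • (1:ℚ) = 2 * j := by
  simp only [cutoff, mem_Icc] at hj
  have h1 : (cutoff N).filter (fun i => ¬ j < i) = Finset.Icc (-(N:ℤ)) j := by
    ext x; simp [cutoff]; omega
  have h2 : (cutoff N).filter (fun i => ¬ i < j) = Finset.Icc j (N:ℤ) := by
    ext x; simp [cutoff]; omega
  rw [h1, h2, Int.card_Icc, Int.card_Icc]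
  have e1 : (j + 1 - -(N:ℤ)).toNat = (j + N + 1).toNat := by omega
  have e2 : ((N:ℤ) + 1 - j).toNat = (N - j + 1).toNat := by omega
  rw [e1, e2, nsmul_eq_mul, nsmul_eq_mul, mul_one, mul_one]
  have c1 : ((j + (N:ℤ) + 1).toNat : ℚ) = (j:ℚ) + N + 1 := by
    rw [← Int.cast_natCast, Int.toNat_of_nonneg (by omega)]; push_cast; ring
  have c2 : (((N:ℤ) - j + 1).toNat : ℚ) = (N:ℚ) - j + 1 := by
    rw [← Int.cast_natCast, Int.toNat_of_nonneg (by omega)]; push_cast; ring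
  rw [c1, c2]; ring

lemma correction_sum :
    ∑ i ∈ cutoff N, ∑ j ∈ cutoff N, (if j < i then (0:A) else (γ j j - γ i i))
      = ∑ k ∈ cutoff N, ((2:ℚ) * (k:ℚ)) • γ k k := by
  have split : ∀ i j : ℤ, (if j < i then (0:A) else (γ j j - γ i i))
      = (if j < i then 0 else γ j j) - (if j < i then 0 else γ i i) := by
    intro i j; split <;> simp
  simp only [split]
  simp only [Finset.sum_sub_distrib]
  rw [Finset.sum_comm (s := cutoff N) (t := cutoff N)
      (f := fun i j => if j < i then (0:A) else γ j j)]
  have e1 : ∀ j ∈ cutoff N, (∑ i ∈ cutoff N, (if j < i then (0:A) else γ j j))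
      = ((cutoff N).filter (fun i => ¬ j < i)).card • γ j j := by
    intro j _
    rw [Finset.sum_ite, Finset.sum_const_zero, zero_add, Finset.sum_const]
  have e2 : ∀ i ∈ cutoff N, (∑ j ∈ cutoff N, (if j < i then (0:A) else γ i i))
      = ((cutoff N).filter (fun j => ¬ j < i)).card • γ i i := by
    intro i _
    rw [Finset.sum_ite, Finset.sum_const_zero, zero_add, Finset.sum_const]
  rw [Finset.sum_congr rfl e1, Finset.sum_congr rfl e2, ← Finset.sum_sub_distrib]
  refine Finset.sum_congr rfl (fun k hk => ?_)
  have hcard := filter_le_card (N := N) k hk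
  have : (((cutoff N).filter (fun i => ¬ k < i)).card • γ k k : A)
      - ((cutoff N).filter (fun j => ¬ j < k)).card • γ k k
      = ((((cutoff N).filter (fun i => ¬ k < i)).card : ℚ)
          - (((cutoff N).filter (fun j => ¬ j < k)).card : ℚ)) • γ k k := by
    rw [sub_smul, Nat.cast_smul_eq_nsmul, Nat.cast_smul_eq_nsmul]
  rw [this]
  congr 1
  simp only [nsmul_eq_mul, mul_one] at hcard
  linarith

lemma part_one
    (hγ : ∀ i ∈ cutoff N, ∀ j ∈ cutoff N, ∀ k ∈ cutoff N, ∀ l ∈ cutoff N,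
      γ i j * γ k l + γ k l * γ i j =
        if i = l ∧ j = k then (2 : A) else 0) :
    normalOrderedCubic N γ =
      (∑ i ∈ cutoff N, ∑ j ∈ cutoff N, spinOp N γ i j * γ j i) +
        ∑ i ∈ cutoff N, ((2 : ℚ) * (i : ℚ)) • γ i i := by
  have per : ∀ i ∈ cutoff N, ∀ j ∈ cutoff N,
      (if j < i then spinOp N γ i j * γ j i else γ j i * spinOp N γ i j)
      = spinOp N γ i j * γ j i + (if j < i then (0:A) else (γ j j - γ i i)) := by
    intro i hi j hj
    by_cases h : j < i
    · rw [if_pos h, if_pos h, add_zero]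
    · rw [if_neg h, if_neg h, ← comm_spin hγ i j hi hj]
      abel
  unfold normalOrderedCubic
  rw [Finset.sum_congr rfl (fun i hi => Finset.sum_congr rfl (fun j hj => per i hi j hj))]
  simp only [Finset.sum_add_distrib]
  rw [correction_sum]

lemma cubic_term
    (hγ : ∀ i ∈ cutoff N, ∀ j ∈ cutoff N, ∀ k ∈ cutoff N, ∀ l ∈ cutoff N,
      γ i j * γ k l + γ k l * γ i j =
        if i = l ∧ j = k then (2 : A) else 0)
    (i j : ℤ) (hi : i ∈ cutoff N) (hj : j ∈ cutoff N)
    (l : ℤ) (hl : l ∈ cutoff N) (m : ℤ) (hm : m ∈ cutoff N) (p : ℤ) (hp : p ∈ cutoff N) :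
    γ l p * γ p m * γ m l * γ i j + γ i j * (γ l p * γ p m * γ m l) =
      (if i = p ∧ j = l then (2:A) else 0) * (γ p m * γ m l)
      - (if i = m ∧ j = p then (2:A) else 0) * (γ l p * γ m l)
      + (if i = l ∧ j = m then (2:A) else 0) * (γ l p * γ p m) := by
  have h1 : γ i j * γ l p = (if i = p ∧ j = l then (2:A) else 0) - γ l p * γ i j :=
    eq_sub_of_add_eq (hγ i hi j hj l hl p hp)
  have h2 : γ i j * γ p m = (if i = m ∧ j = p then (2:A) else 0) - γ p m * γ i j :=
    eq_sub_of_add_eq (hγ i hi j hj p hp m hm)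
  have h3 : γ i j * γ m l = (if i = l ∧ j = m then (2:A) else 0) - γ m l * γ i j :=
    eq_sub_of_add_eq (hγ i hi j hj m hm l hl)
  calc γ l p * γ p m * γ m l * γ i j + γ i j * (γ l p * γ p m * γ m l)
      = γ l p * γ p m * γ m l * γ i j + (γ i j * γ l p) * γ p m * γ m l := by noncomm_ring
    _ = γ l p * γ p m * γ m l * γ i j
        + ((if i = p ∧ j = l then (2:A) else 0) - γ l p * γ i j) * γ p m * γ m l := by rw [h1]
    _ = γ l p * γ p m * γ m l * γ i j
        + (if i = p ∧ j = l then (2:A) else 0) * (γ p m * γ m l)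
        - γ l p * (γ i j * γ p m) * γ m l := by noncomm_ring
    _ = γ l p * γ p m * γ m l * γ i j
        + (if i = p ∧ j = l then (2:A) else 0) * (γ p m * γ m l)
        - γ l p * ((if i = m ∧ j = p then (2:A) else 0) - γ p m * γ i j) * γ m l := by rw [h2]
    _ = γ l p * γ p m * γ m l * γ i j
        + (if i = p ∧ j = l then (2:A) else 0) * (γ p m * γ m l)
        - γ l p * (if i = m ∧ j = p then (2:A) else 0) * γ m l
        + γ l p * γ p m * (γ i j * γ m l) := by noncomm_ring
    _ = γ l p * γ p m * γ m l * γ i j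
        + (if i = p ∧ j = l then (2:A) else 0) * (γ p m * γ m l)
        - γ l p * (if i = m ∧ j = p then (2:A) else 0) * γ m l
        + γ l p * γ p m * ((if i = l ∧ j = m then (2:A) else 0) - γ m l * γ i j) := by rw [h3]
    _ = (if i = p ∧ j = l then (2:A) else 0) * (γ p m * γ m l)
        - γ l p * (if i = m ∧ j = p then (2:A) else 0) * γ m l
        + γ l p * γ p m * (if i = l ∧ j = m then (2:A) else 0) := by noncomm_ring
    _ = _ := by
        rw [two_ite_comm (i = m ∧ j = p) (γ l p), two_ite_comm (i = l ∧ j = m) (γ l p * γ p m)]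
        noncomm_ring

lemma cubic_anti
    (hγ : ∀ i ∈ cutoff N, ∀ j ∈ cutoff N, ∀ k ∈ cutoff N, ∀ l ∈ cutoff N,
      γ i j * γ k l + γ k l * γ i j =
        if i = l ∧ j = k then (2 : A) else 0)
    (i j : ℤ) (hi : i ∈ cutoff N) (hj : j ∈ cutoff N) :
    (∑ l ∈ cutoff N, ∑ m ∈ cutoff N, ∑ p ∈ cutoff N, γ l p * γ p m * γ m l) * γ i j
      + γ i j * (∑ l ∈ cutoff N, ∑ m ∈ cutoff N, ∑ p ∈ cutoff N, γ l p * γ p m * γ m l)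
    = (6:ℚ) • (∑ m ∈ cutoff N, γ i m * γ m j)
      - (if i = j then ((8*(N:ℚ)+4)) • (1:A) else 0) := by
  have expand : (∑ l ∈ cutoff N, ∑ m ∈ cutoff N, ∑ p ∈ cutoff N, γ l p * γ p m * γ m l) * γ i j
      + γ i j * (∑ l ∈ cutoff N, ∑ m ∈ cutoff N, ∑ p ∈ cutoff N, γ l p * γ p m * γ m l)
      = ∑ l ∈ cutoff N, ∑ m ∈ cutoff N, ∑ p ∈ cutoff N,
          (γ l p * γ p m * γ m l * γ i j + γ i j * (γ l p * γ p m * γ m l)) := by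
    simp only [Finset.sum_mul, Finset.mul_sum, Finset.sum_add_distrib]
  rw [expand]
  have step : ∀ l ∈ cutoff N, ∀ m ∈ cutoff N, ∀ p ∈ cutoff N,
      γ l p * γ p m * γ m l * γ i j + γ i j * (γ l p * γ p m * γ m l) =
      (if i = p ∧ j = l then (2:A) else 0) * (γ p m * γ m l)
      - (if i = m ∧ j = p then (2:A) else 0) * (γ l p * γ m l)
      + (if i = l ∧ j = m then (2:A) else 0) * (γ l p * γ p m) := by
    intro l hl m hm p hp; exact cubic_term hγ i j hi hj l hl m hm p hp
  rw [Finset.sum_congr rfl (fun l hl => Finset.sum_congr rfl (fun m hm =>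
    Finset.sum_congr rfl (fun p hp => step l hl m hm p hp)))]
  simp only [Finset.sum_add_distrib, Finset.sum_sub_distrib]
  have hS1 : ∑ l ∈ cutoff N, ∑ m ∈ cutoff N, ∑ p ∈ cutoff N,
      (if i = p ∧ j = l then (2:A) else 0) * (γ p m * γ m l)
      = ∑ m ∈ cutoff N, (2:A) * (γ i m * γ m j) := by
    rw [Finset.sum_eq_single_of_mem j hj (fun l _ hlj => by
      refine Finset.sum_eq_zero (fun m _ => Finset.sum_eq_zero (fun p _ => ?_))
      rw [if_neg (fun h => hlj h.2.symm), zero_mul])]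
    refine Finset.sum_congr rfl (fun m _ => ?_)
    rw [Finset.sum_eq_single_of_mem i hi (fun p _ hpi => by
      rw [if_neg (fun h => hpi h.1.symm), zero_mul])]
    simp
  have hS3 : ∑ l ∈ cutoff N, ∑ m ∈ cutoff N, ∑ p ∈ cutoff N,
      (if i = l ∧ j = m then (2:A) else 0) * (γ l p * γ p m)
      = ∑ p ∈ cutoff N, (2:A) * (γ i p * γ p j) := by
    rw [Finset.sum_eq_single_of_mem i hi (fun l _ hli => by
      refine Finset.sum_eq_zero (fun m _ => Finset.sum_eq_zero (fun p _ => ?_))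
      rw [if_neg (fun h => hli h.1.symm), zero_mul])]
    rw [Finset.sum_eq_single_of_mem j hj (fun m _ hmj => by
      refine Finset.sum_eq_zero (fun p _ => ?_)
      rw [if_neg (fun h => hmj h.2.symm), zero_mul])]
    simp
  have hS2 : ∑ l ∈ cutoff N, ∑ m ∈ cutoff N, ∑ p ∈ cutoff N,
      (if i = m ∧ j = p then (2:A) else 0) * (γ l p * γ m l)
      = ∑ l ∈ cutoff N, (2:A) * (γ l j * γ i l) := by
    refine Finset.sum_congr rfl (fun l _ => ?_)
    rw [Finset.sum_eq_single_of_mem i hi (fun m _ hmi => by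
      refine Finset.sum_eq_zero (fun p _ => ?_)
      rw [if_neg (fun h => hmi h.1.symm), zero_mul])]
    rw [Finset.sum_eq_single_of_mem j hj (fun p _ hpj => by
      rw [if_neg (fun h => hpj h.2.symm), zero_mul])]
    simp
  rw [hS1, hS2, hS3]
  have swap : ∀ l ∈ cutoff N, (2:A) * (γ l j * γ i l)
      = (2:A) * (if j = i then (2:A) else 0) - (2:A) * (γ i l * γ l j) := by
    intro l hl
    have h := eq_sub_of_add_eq (hγ l hl j hj i hi l hl)
    simp only [true_and] at h
    rw [h, mul_sub]
  rw [Finset.sum_congr rfl swap, Finset.sum_sub_distrib, Finset.sum_const, card_cutoff]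
  simp only [two_mul_eq_smul]
  simp only [← Finset.smul_sum]
  have hite : ((2*N+1) • ((2:ℚ) • (if j = i then (2:A) else 0)))
      = (if i = j then ((8*(N:ℚ)+4)) • (1:A) else 0) := by
    by_cases h : i = j
    · rw [if_pos h, if_pos h.symm, ← Nat.cast_smul_eq_nsmul ℚ, smul_smul]
      rw [show (2:A) = (2:ℚ) • (1:A) by rw [Algebra.smul_def, map_ofNat, mul_one], smul_smul]
      congr 1
      push_cast
      ring
    · rw [if_neg h, if_neg (fun hh => h hh.symm), smul_zero, smul_zero]
  rw [hite]
  generalize (if i = j then ((8*(N:ℚ)+4)) • (1:A) else 0) = X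
  module

lemma linear_anti (c : ℤ → ℚ)
    (hγ : ∀ i ∈ cutoff N, ∀ j ∈ cutoff N, ∀ k ∈ cutoff N, ∀ l ∈ cutoff N,
      γ i j * γ k l + γ k l * γ i j =
        if i = l ∧ j = k then (2 : A) else 0)
    (i j : ℤ) (hi : i ∈ cutoff N) (hj : j ∈ cutoff N) :
    (∑ l ∈ cutoff N, c l • γ l l) * γ i j + γ i j * (∑ l ∈ cutoff N, c l • γ l l)
      = if i = j then ((2 * c i) • (1:A)) else 0 := by
  rw [Finset.sum_mul, Finset.mul_sum, ← Finset.sum_add_distrib]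
  have per : ∀ l ∈ cutoff N, (c l • γ l l) * γ i j + γ i j * (c l • γ l l)
      = c l • (if l = j ∧ l = i then (2:A) else 0) := by
    intro l hl
    rw [smul_mul_assoc, mul_smul_comm, ← smul_add, hγ l hl l hl i hi j hj]
  rw [Finset.sum_congr rfl per]
  rw [Finset.sum_eq_single_of_mem j hj (fun l _ hlj => by
    rw [if_neg (fun h => hlj h.1), smul_zero])]
  by_cases h : i = j
  · rw [if_pos ⟨rfl, h.symm⟩, if_pos h, h,
      show (2:A) = (2:ℚ) • (1:A) by rw [Algebra.smul_def, map_ofNat, mul_one],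
      smul_smul, mul_comm]
  · rw [if_neg (fun hh => h hh.2.symm), if_neg h, smul_zero]

lemma sum_sg :
    ∑ l ∈ cutoff N, ∑ m ∈ cutoff N, spinOp N γ l m * γ m l
      = (2:ℚ)⁻¹ • (∑ l ∈ cutoff N, ∑ m ∈ cutoff N, ∑ p ∈ cutoff N, γ l p * γ p m * γ m l)
        - ∑ l ∈ cutoff N, ((N:ℚ) - (l:ℚ) + (2:ℚ)⁻¹) • γ l l := by
  have per : ∀ l ∈ cutoff N, ∀ m ∈ cutoff N, spinOp N γ l m * γ m l
      = (2:ℚ)⁻¹ • (∑ p ∈ cutoff N, γ l p * γ p m * γ m l)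
        - (if l = m then ((N:ℚ) - (l:ℚ) + (2:ℚ)⁻¹) • γ m l else 0) := by
    intro l _ m _
    unfold spinOp
    rw [sub_mul, smul_mul_assoc, Finset.sum_mul, ite_mul, zero_mul, smul_mul_assoc, one_mul]
  rw [Finset.sum_congr rfl (fun l hl => Finset.sum_congr rfl (fun m hm => per l hl m hm))]
  simp only [Finset.sum_sub_distrib]
  simp only [← Finset.smul_sum]
  congr 1
  refine Finset.sum_congr rfl (fun l hl => ?_)
  rw [Finset.sum_eq_single_of_mem l hl (fun m _ hml => by
    rw [if_neg (fun h => hml h.symm)])]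
  rw [if_pos rfl]

end Aux

/-- With the normal ordering `Σ :s_{ij}γ_{ji}: = Σ_{i>j} s_{ij}γ_{ji} + Σ_{i≤j} γ_{ji}s_{ij}`,
one has `Σ_{i,j} :s_{ij}γ_{ji}: = Σ_{i,j} s_{ij}γ_{ji} + 2 Σ_i i γ_{ii}`, and
consequently `[Σ_{ℓ,m} :s_{ℓm}γ_{mℓ}:, γ_{ij}]₊ = 6 s_{ij}`. -/
theorem normalOrderedCubic_eq_and_anticommutator {A : Type*} [Ring A] [Algebra ℚ A]
    (N : ℕ) (γ : ℤ → ℤ → A)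
    (hγ : ∀ i ∈ cutoff N, ∀ j ∈ cutoff N, ∀ k ∈ cutoff N, ∀ l ∈ cutoff N,
      γ i j * γ k l + γ k l * γ i j =
        if i = l ∧ j = k then (2 : A) else 0) :
    (normalOrderedCubic N γ =
      (∑ i ∈ cutoff N, ∑ j ∈ cutoff N, spinOp N γ i j * γ j i) +
        ∑ i ∈ cutoff N, ((2 : ℚ) * (i : ℚ)) • γ i i) ∧
    (∀ i ∈ cutoff N, ∀ j ∈ cutoff N,
      normalOrderedCubic N γ * γ i j + γ i j * normalOrderedCubic N γ =
        (6 : ℚ) • spinOp N γ i j) := by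
  refine ⟨part_one hγ, fun i hi j hj => ?_⟩
  rw [part_one hγ, sum_sg]
  set T := ∑ l ∈ cutoff N, ∑ m ∈ cutoff N, ∑ p ∈ cutoff N, γ l p * γ p m * γ m l with hT
  set L := ∑ l ∈ cutoff N, ((N:ℚ) - (l:ℚ) + (2:ℚ)⁻¹) • γ l l with hL
  set E := ∑ l ∈ cutoff N, ((2:ℚ) * (l:ℚ)) • γ l l with hE
  have expand2 : ((2:ℚ)⁻¹ • T - L + E) * γ i j + γ i j * ((2:ℚ)⁻¹ • T - L + E)
      = (2:ℚ)⁻¹ • (T * γ i j + γ i j * T) - (L * γ i j + γ i j * L)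
        + (E * γ i j + γ i j * E) := by
    simp only [sub_mul, add_mul, mul_sub, mul_add, smul_mul_assoc, mul_smul_comm, smul_add]
    abel
  rw [expand2, hT, hL, hE,
    cubic_anti hγ i j hi hj,
    linear_anti (fun l => (N:ℚ) - (l:ℚ) + (2:ℚ)⁻¹) hγ i j hi hj,
    linear_anti (fun l => (2:ℚ) * (l:ℚ)) hγ i j hi hj]
  unfold spinOp
  by_cases h : i = j
  · simp only [if_pos h]
    match_scalars <;> push_cast <;> ring
  · simp only [if_neg h]
    match_scalars <;> push_cast <;> ring
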